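/- For any subset A of the vertices of the triangular grid graph T_n, the neighborhood of the 1-left-compression of A is no larger than the neighborhood of A: |N(C₁⁻(A))| ≤ |N(A)|. -/
import Mathlib


/-- Vertex set of the triangular grid graph `T_n`. -/
def TnV (n : ℕ) : Finset (ℕ × ℕ) :=
  (Finset.range (n+1) ×ˢ Finset.range (n+1)).filter (fun v => v.1 + v.2 ≤ n)

/-- Adjacency in the triangular grid graph. -/
def adj (u v : ℕ × ℕ) : Prop :=
  (v.1 = u.1 + 1 ∧ v.2 = u.2) ∨ (u.1 = v.1 + 1 ∧ u.2 = v.2) ∨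
  (v.2 = u.2 + 1 ∧ v.1 = u.1) ∨ (u.2 = v.2 + 1 ∧ u.1 = v.1) ∨
  (v.1 = u.1 + 1 ∧ u.2 = v.2 + 1) ∨ (u.1 = v.1 + 1 ∧ v.2 = u.2 + 1)

instance : ∀ u v : ℕ × ℕ, Decidable (adj u v) := fun u v => by
  unfold adj; infer_instance

/-- The (exterior) vertex boundary of `A` in `T_n`. -/
def boundary (n : ℕ) (A : Finset (ℕ × ℕ)) : Finset (ℕ × ℕ) :=
  (TnV n).filter (fun v => v ∉ A ∧ ∃ u ∈ A, adj u v)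

/-- The neighborhood `N(A)` of `A` in `T_n`. -/
def nbhd (n : ℕ) (A : Finset (ℕ × ℕ)) : Finset (ℕ × ℕ) :=
  (TnV n).filter (fun v => v ∈ A ∨ ∃ u ∈ A, adj u v)

/-- `sle u v` : `u` comes before (or equals) `v` in the simplicial ordering. -/
def sle (u v : ℕ × ℕ) : Prop :=
  u.1 + u.2 < v.1 + v.2 ∨ (u.1 + u.2 = v.1 + v.2 ∧ v.1 ≤ u.1)

/-- `C` is an initial segment of the simplicial ordering on `V(T_n)`. -/
def IsInitSeg (n : ℕ) (C : Finset (ℕ × ℕ)) : Prop :=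
  C ⊆ TnV n ∧ ∀ v ∈ C, ∀ u ∈ TnV n, sle u v → u ∈ C

/-- `D` is a final segment of the simplicial ordering on `V(T_n)`. -/
def IsFinalSeg (n : ℕ) (D : Finset (ℕ × ℕ)) : Prop :=
  D ⊆ TnV n ∧ ∀ v ∈ D, ∀ u ∈ TnV n, sle v u → u ∈ D

/-- The 1-left-compression: pushes the vertices in each column downward. -/
def comp1 (A : Finset (ℕ × ℕ)) : Finset (ℕ × ℕ) :=
  (A.image Prod.fst).biUnion (fun t =>
    (Finset.range ((A.filter (fun u => u.1 = t)).card)).image (fun y => (t, y)))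

/-- The 2-left-compression: pushes the vertices in each row to the left. -/
def comp2 (A : Finset (ℕ × ℕ)) : Finset (ℕ × ℕ) :=
  (A.image Prod.snd).biUnion (fun t =>
    (Finset.range ((A.filter (fun u => u.2 = t)).card)).image (fun x => (x, t)))

/-- section of A at column t -/
def sec (A : Finset (ℕ × ℕ)) (t : ℕ) : Finset ℕ :=
  (A.filter (fun u => u.1 = t)).image Prod.snd

lemma mem_sec {A : Finset (ℕ × ℕ)} {t y : ℕ} : y ∈ sec A t ↔ (t, y) ∈ A := by
  simp only [sec, Finset.mem_image, Finset.mem_filter]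
  constructor
  · rintro ⟨⟨a, b⟩, ⟨hab, rfl⟩, rfl⟩; exact hab
  · intro h; exact ⟨(t, y), ⟨h, rfl⟩, rfl⟩

lemma card_filter_fst (A : Finset (ℕ × ℕ)) (t : ℕ) :
    (A.filter (fun u => u.1 = t)).card = (sec A t).card := by
  rw [sec, Finset.card_image_of_injOn]
  intro u hu v hv h
  simp only [Finset.coe_filter, Set.mem_setOf_eq] at hu hv
  exact Prod.ext (hu.2.trans hv.2.symm) h

lemma sec_comp1 (A : Finset (ℕ × ℕ)) (t : ℕ) :
    sec (comp1 A) t = Finset.range ((sec A t).card) := by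
  ext y
  simp only [mem_sec, comp1, Finset.mem_biUnion, Finset.mem_image, Finset.mem_range,
    card_filter_fst]
  constructor
  · rintro ⟨s, ⟨u, hu, rfl⟩, z, hz, h⟩
    rw [Prod.mk.injEq] at h
    rw [← h.2, ← h.1]
    exact hz
  · intro hy
    have hpos : 0 < (sec A t).card := Nat.pos_of_ne_zero (by omega)
    have hne : (sec A t).Nonempty := Finset.card_pos.mp hpos
    obtain ⟨z, hz⟩ := hne
    exact ⟨t, ⟨(t, z), mem_sec.mp hz, rfl⟩, y, hy, rfl⟩

lemma card_eq_sum_sec {n : ℕ} {B : Finset (ℕ × ℕ)} (hB : B ⊆ TnV n) :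
    B.card = ∑ t ∈ Finset.range (n+1), (sec B t).card := by
  rw [Finset.card_eq_sum_card_fiberwise (f := Prod.fst) (t := Finset.range (n+1))]
  · exact Finset.sum_congr rfl (fun t _ => card_filter_fst B t)
  · intro x hx
    have := hB hx
    simp only [TnV, Finset.mem_filter, Finset.mem_product, Finset.mem_range] at this
    exact Finset.mem_range.mpr this.1.1

lemma mem_nbhd_iff {n : ℕ} {B : Finset (ℕ × ℕ)} {t y : ℕ} :
    (t, y) ∈ nbhd n B ↔ t + y ≤ n ∧
      (y ∈ sec B t ∨
       y + 1 ∈ sec B t ∨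
       (∃ z, y = z + 1 ∧ z ∈ sec B t) ∨
       (∃ s, t = s + 1 ∧ y ∈ sec B s) ∨
       (∃ s, t = s + 1 ∧ y + 1 ∈ sec B s) ∨
       y ∈ sec B (t+1) ∨
       (∃ z, y = z + 1 ∧ z ∈ sec B (t+1))) := by
  simp only [nbhd, TnV, Finset.mem_filter, Finset.mem_product, Finset.mem_range]
  constructor
  · rintro ⟨⟨⟨h1, h2⟩, h3⟩, hmem⟩
    refine ⟨h3, ?_⟩
    rcases hmem with h | ⟨⟨a, b⟩, hu, hadj⟩
    · exact Or.inl (mem_sec.mpr h)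
    · rcases hadj with ⟨e1, e2⟩ | ⟨e1, e2⟩ | ⟨e1, e2⟩ | ⟨e1, e2⟩ | ⟨e1, e2⟩ | ⟨e1, e2⟩ <;>
        simp only at e1 e2
      · -- t = a+1, y = b : disjunct 4
        exact Or.inr (Or.inr (Or.inr (Or.inl ⟨a, e1, mem_sec.mpr (by rw [e2]; exact hu)⟩)))
      · -- a = t+1, b = y : disjunct 6
        refine Or.inr (Or.inr (Or.inr (Or.inr (Or.inr (Or.inl (mem_sec.mpr ?_))))))
        rw [← e1, ← e2]; exact hu
      · -- y = b+1, t = a : disjunct 3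
        refine Or.inr (Or.inr (Or.inl ⟨b, e1, mem_sec.mpr ?_⟩))
        rw [e2]; exact hu
      · -- b = y+1, a = t : disjunct 2
        refine Or.inr (Or.inl (mem_sec.mpr ?_))
        rw [← e1, ← e2]; exact hu
      · -- t = a+1, b = y+1 : disjunct 5
        exact Or.inr (Or.inr (Or.inr (Or.inr (Or.inl ⟨a, e1, mem_sec.mpr (by rw [← e2]; exact hu)⟩))))
      · -- a = t+1, y = b+1 : disjunct 7
        refine Or.inr (Or.inr (Or.inr (Or.inr (Or.inr (Or.inr ⟨b, e2, mem_sec.mpr ?_⟩)))))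
        rw [← e1]; exact hu
  · rintro ⟨h3, hd⟩
    refine ⟨⟨⟨by omega, by omega⟩, h3⟩, ?_⟩
    rcases hd with h | h | ⟨z, rfl, h⟩ | ⟨s, rfl, h⟩ | ⟨s, rfl, h⟩ | h | ⟨z, rfl, h⟩
    · exact Or.inl (mem_sec.mp h)
    · exact Or.inr ⟨(t, y+1), mem_sec.mp h, Or.inr (Or.inr (Or.inr (Or.inl ⟨rfl, rfl⟩)))⟩
    · exact Or.inr ⟨(t, z), mem_sec.mp h, Or.inr (Or.inr (Or.inl ⟨rfl, rfl⟩))⟩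
    · exact Or.inr ⟨(s, y), mem_sec.mp h, Or.inl ⟨rfl, rfl⟩⟩
    · exact Or.inr ⟨(s, y+1), mem_sec.mp h, Or.inr (Or.inr (Or.inr (Or.inr (Or.inl ⟨rfl, rfl⟩))))⟩
    · exact Or.inr ⟨(t+1, y), mem_sec.mp h, Or.inr (Or.inl ⟨rfl, rfl⟩)⟩
    · exact Or.inr ⟨(t+1, z), mem_sec.mp h, Or.inr (Or.inr (Or.inr (Or.inr (Or.inr ⟨rfl, rfl⟩))))⟩

/-- Own-column lemma. -/
lemma lemOwn (k : ℕ) (S : Finset ℕ) (hne : S.Nonempty) (hS : ∀ z ∈ S, z ≤ k) :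
    min (k+1) (S.card + 1) ≤
      ((Finset.range (k+1)).filter
        (fun y => y ∈ S ∨ y + 1 ∈ S ∨ (0 < y ∧ y - 1 ∈ S))).card := by
  set U := (Finset.range (k+1)).filter
      (fun y => y ∈ S ∨ y + 1 ∈ S ∨ (0 < y ∧ y - 1 ∈ S)) with hU
  have hSU : S ⊆ U := by
    intro z hz
    exact Finset.mem_filter.mpr ⟨Finset.mem_range.mpr (by have := hS z hz; omega), Or.inl hz⟩
  by_cases hfull : Finset.range (k+1) ⊆ S
  · have : k + 1 ≤ U.card := by
      calc k + 1 = (Finset.range (k+1)).card := (Finset.card_range _).symm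
        _ ≤ U.card := Finset.card_le_card (hfull.trans hSU)
    omega
  · have hD : ((Finset.range (k+1)) \ S).Nonempty := by
      rw [Finset.sdiff_nonempty]; exact hfull
    by_cases hk : k ∈ S
    · set g := ((Finset.range (k+1)) \ S).max' hD with hg
      have hgmem := ((Finset.range (k+1)) \ S).max'_mem hD
      rw [← hg, Finset.mem_sdiff, Finset.mem_range] at hgmem
      obtain ⟨hgk, hgS⟩ := hgmem
      have hgk' : g < k := by
        by_contra hcon
        push_neg at hcon
        have : g = k := by omega
        exact hgS (this ▸ hk)
      have hg1 : g + 1 ∈ S := by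
        by_contra hcon
        have : g + 1 ∈ (Finset.range (k+1)) \ S :=
          Finset.mem_sdiff.mpr ⟨Finset.mem_range.mpr (by omega), hcon⟩
        have := Finset.le_max' _ _ this
        omega
      have hgU : g ∈ U :=
        Finset.mem_filter.mpr ⟨Finset.mem_range.mpr (by omega), Or.inr (Or.inl hg1)⟩
      have hins : insert g S ⊆ U := Finset.insert_subset hgU hSU
      have := Finset.card_le_card hins
      rw [Finset.card_insert_of_notMem hgS] at this
      omega
    · set m := S.max' hne with hm
      have hmS := S.max'_mem hne
      rw [← hm] at hmS
      have hmk : m ≤ k := hS m hmS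
      have hmk' : m < k := by
        by_contra hcon
        push_neg at hcon
        have : m = k := by omega
        exact hk (this ▸ hmS)
      have hm1 : m + 1 ∉ S := fun hcon => by have := Finset.le_max' S _ hcon; omega
      have hmU : m + 1 ∈ U :=
        Finset.mem_filter.mpr ⟨Finset.mem_range.mpr (by omega),
          Or.inr (Or.inr ⟨by omega, by simpa using hmS⟩)⟩
      have hins : insert (m+1) S ⊆ U := Finset.insert_subset hmU hSU
      have := Finset.card_le_card hins
      rw [Finset.card_insert_of_notMem hm1] at this
      omega

/-- Left-column lemma. -/
lemma lemLeft (k : ℕ) (S : Finset ℕ) (hS : ∀ z ∈ S, z ≤ k + 1) :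
    min (k+1) S.card ≤
      ((Finset.range (k+1)).filter (fun y => y ∈ S ∨ y + 1 ∈ S)).card := by
  set U := (Finset.range (k+1)).filter (fun y => y ∈ S ∨ y + 1 ∈ S) with hU
  by_cases h : Finset.range (k+1) ⊆ U
  · have : k + 1 ≤ U.card := by
      calc k + 1 = (Finset.range (k+1)).card := (Finset.card_range _).symm
        _ ≤ U.card := Finset.card_le_card h
    omega
  · have hD : ((Finset.range (k+1)) \ U).Nonempty := by
      rw [Finset.sdiff_nonempty]; exact h
    set g := ((Finset.range (k+1)) \ U).max' hD with hg
    have hgmem := ((Finset.range (k+1)) \ U).max'_mem hD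
    rw [← hg, Finset.mem_sdiff, Finset.mem_range] at hgmem
    obtain ⟨hgk, hgU⟩ := hgmem
    have hgS : g ∉ S := fun hc =>
      hgU (Finset.mem_filter.mpr ⟨Finset.mem_range.mpr hgk, Or.inl hc⟩)
    have hg1S : g + 1 ∉ S := fun hc =>
      hgU (Finset.mem_filter.mpr ⟨Finset.mem_range.mpr hgk, Or.inr hc⟩)
    have hfe : S.filter (fun z => ¬ z < g) = S.filter (fun z => g + 1 < z) := by
      ext z
      simp only [Finset.mem_filter]
      constructor
      · rintro ⟨hz, hzz⟩
        have h1 : z ≠ g := fun e => hgS (e ▸ hz)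
        have h2 : z ≠ g + 1 := fun e => hg1S (e ▸ hz)
        exact ⟨hz, by omega⟩
      · rintro ⟨hz, hzz⟩; exact ⟨hz, by omega⟩
    have hsplit : (S.filter (fun z => z < g)).card + (S.filter (fun z => g + 1 < z)).card
        = S.card := by
      rw [← hfe]
      exact Finset.card_filter_add_card_filter_not (p := fun z => z < g)
    have h1 : S.filter (fun z => z < g) ⊆ U := by
      intro z hz
      rw [Finset.mem_filter] at hz
      exact Finset.mem_filter.mpr ⟨Finset.mem_range.mpr (by omega), Or.inl hz.1⟩
    have h2 : (S.filter (fun z => g + 1 < z)).image (fun z => z - 1) ⊆ U := by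
      intro y hy
      rw [Finset.mem_image] at hy
      obtain ⟨z, hz, rfl⟩ := hy
      rw [Finset.mem_filter] at hz
      have hzk := hS z hz.1
      refine Finset.mem_filter.mpr ⟨Finset.mem_range.mpr (by omega), Or.inr ?_⟩
      have hzz : z - 1 + 1 = z := by omega
      rw [hzz]
      exact hz.1
    have hdisj : Disjoint (S.filter (fun z => z < g))
        ((S.filter (fun z => g + 1 < z)).image (fun z => z - 1)) := by
      rw [Finset.disjoint_left]
      intro x hx hx2
      rw [Finset.mem_filter] at hx
      simp only [Finset.mem_image, Finset.mem_filter] at hx2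
      obtain ⟨z, ⟨hzS, hzg⟩, hzx⟩ := hx2
      omega
    have hcardim : ((S.filter (fun z => g + 1 < z)).image (fun z => z - 1)).card
        = (S.filter (fun z => g + 1 < z)).card := by
      apply Finset.card_image_of_injOn
      intro x hx y hy hxy
      simp only [Finset.coe_filter, Set.mem_setOf_eq] at hx hy
      change x - 1 = y - 1 at hxy
      omega
    have hsub : (S.filter (fun z => z < g)) ∪
        ((S.filter (fun z => g + 1 < z)).image (fun z => z - 1)) ⊆ U :=
      Finset.union_subset h1 h2
    have := Finset.card_le_card hsub
    rw [Finset.card_union_of_disjoint hdisj, hcardim] at this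
    omega

/-- Right-column lemma. -/
lemma lemRight (k : ℕ) (S : Finset ℕ) (hne : S.Nonempty) (hS : ∀ z ∈ S, z + 1 ≤ k) :
    S.card + 1 ≤
      ((Finset.range (k+1)).filter (fun y => y ∈ S ∨ (0 < y ∧ y - 1 ∈ S))).card := by
  set U := (Finset.range (k+1)).filter (fun y => y ∈ S ∨ (0 < y ∧ y - 1 ∈ S)) with hU
  have hSU : S ⊆ U := fun z hz =>
    Finset.mem_filter.mpr ⟨Finset.mem_range.mpr (by have := hS z hz; omega), Or.inl hz⟩
  set m := S.max' hne with hm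
  have hmS := S.max'_mem hne
  rw [← hm] at hmS
  have hm1 : m + 1 ∉ S := fun hcon => by have := Finset.le_max' S _ hcon; omega
  have hmU : m + 1 ∈ U :=
    Finset.mem_filter.mpr ⟨Finset.mem_range.mpr (by have := hS m hmS; omega),
      Or.inr ⟨by omega, by simpa using hmS⟩⟩
  have hsub : insert (m+1) S ⊆ U := Finset.insert_subset hmU hSU
  have := Finset.card_le_card hsub
  rwa [Finset.card_insert_of_notMem hm1] at this

lemma sec_bound {n : ℕ} {A : Finset (ℕ × ℕ)} (hA : A ⊆ TnV n) {s z : ℕ}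
    (hz : z ∈ sec A s) : s + z ≤ n := by
  have := hA (mem_sec.mp hz)
  simp only [TnV, Finset.mem_filter] at this
  exact this.2

lemma col_le (n t : ℕ) (ht : t ≤ n) (A : Finset (ℕ × ℕ)) (hA : A ⊆ TnV n) :
    (sec (nbhd n (comp1 A)) t).card ≤ (sec (nbhd n A) t).card := by
  set k := n - t with hk
  set a := if (sec A t).card = 0 then 0 else (sec A t).card + 1 with ha
  set b := if t = 0 then 0 else (sec A (t-1)).card with hb
  set d := if (sec A (t+1)).card = 0 then 0 else (sec A (t+1)).card + 1 with hd
  -- upper bound for the compressed side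
  have hup : sec (nbhd n (comp1 A)) t ⊆ Finset.range (min (k+1) (max a (max b d))) := by
    intro y hy
    rw [mem_sec, mem_nbhd_iff] at hy
    obtain ⟨hyn, hcase⟩ := hy
    rw [Finset.mem_range]
    have hyk : y < k + 1 := by omega
    refine lt_min hyk ?_
    simp only [sec_comp1, Finset.mem_range] at hcase
    rcases hcase with h | h | ⟨z, rfl, h⟩ | ⟨s, hs, h⟩ | ⟨s, hs, h⟩ | h | ⟨z, rfl, h⟩
    · have hav : a = (sec A t).card + 1 := if_neg (by omega)
      exact lt_of_lt_of_le (by omega) (le_max_left _ _)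
    · have hav : a = (sec A t).card + 1 := if_neg (by omega)
      exact lt_of_lt_of_le (by omega) (le_max_left _ _)
    · have hav : a = (sec A t).card + 1 := if_neg (by omega)
      exact lt_of_lt_of_le (by omega) (le_max_left _ _)
    · have hbv : b = (sec A s).card := by rw [hb, if_neg (by omega), hs]; simp
      exact lt_of_lt_of_le (by omega) (le_trans (le_max_left b d) (le_max_right a _))
    · have hbv : b = (sec A s).card := by rw [hb, if_neg (by omega), hs]; simp
      exact lt_of_lt_of_le (by omega) (le_trans (le_max_left b d) (le_max_right a _))
    · have hdv : d = (sec A (t+1)).card + 1 := if_neg (by omega)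
      exact lt_of_lt_of_le (by omega) (le_trans (le_max_right b d) (le_max_right a _))
    · have hdv : d = (sec A (t+1)).card + 1 := if_neg (by omega)
      exact lt_of_lt_of_le (by omega) (le_trans (le_max_right b d) (le_max_right a _))
  have hupc : (sec (nbhd n (comp1 A)) t).card ≤ min (k+1) (max a (max b d)) := by
    have := Finset.card_le_card hup
    rwa [Finset.card_range] at this
  -- lower bound for the original side
  have h1 : min (k+1) a ≤ (sec (nbhd n A) t).card := by
    by_cases hct : (sec A t).card = 0
    · rw [ha, if_pos hct]; simp
    · rw [ha, if_neg hct]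
      have hne : (sec A t).Nonempty := Finset.card_pos.mp (Nat.pos_of_ne_zero hct)
      have hS : ∀ z ∈ sec A t, z ≤ k := fun z hz => by
        have := sec_bound hA hz; omega
      refine le_trans (lemOwn k (sec A t) hne hS) (Finset.card_le_card ?_)
      intro y hy
      simp only [Finset.mem_filter, Finset.mem_range] at hy
      obtain ⟨hyk, hc⟩ := hy
      rw [mem_sec, mem_nbhd_iff]
      refine ⟨by omega, ?_⟩
      rcases hc with h | h | ⟨h0, h⟩
      · exact Or.inl h
      · exact Or.inr (Or.inl h)
      · exact Or.inr (Or.inr (Or.inl ⟨y - 1, by omega, h⟩))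
  have h2 : min (k+1) b ≤ (sec (nbhd n A) t).card := by
    by_cases ht0 : t = 0
    · rw [hb, if_pos ht0]; simp
    · rw [hb, if_neg ht0]
      have hS : ∀ z ∈ sec A (t-1), z ≤ k + 1 := fun z hz => by
        have := sec_bound hA hz; omega
      refine le_trans (lemLeft k (sec A (t-1)) hS) (Finset.card_le_card ?_)
      intro y hy
      simp only [Finset.mem_filter, Finset.mem_range] at hy
      obtain ⟨hyk, hc⟩ := hy
      rw [mem_sec, mem_nbhd_iff]
      refine ⟨by omega, ?_⟩
      rcases hc with h | h
      · exact Or.inr (Or.inr (Or.inr (Or.inl ⟨t - 1, by omega, h⟩)))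
      · exact Or.inr (Or.inr (Or.inr (Or.inr (Or.inl ⟨t - 1, by omega, h⟩))))
  have h3 : min (k+1) d ≤ (sec (nbhd n A) t).card := by
    by_cases hct : (sec A (t+1)).card = 0
    · rw [hd, if_pos hct]; simp
    · rw [hd, if_neg hct]
      have hne : (sec A (t+1)).Nonempty := Finset.card_pos.mp (Nat.pos_of_ne_zero hct)
      have hS : ∀ z ∈ sec A (t+1), z + 1 ≤ k := fun z hz => by
        have := sec_bound hA hz; omega
      refine le_trans (min_le_right _ _) (le_trans (lemRight k (sec A (t+1)) hne hS)
        (Finset.card_le_card ?_))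
      intro y hy
      simp only [Finset.mem_filter, Finset.mem_range] at hy
      obtain ⟨hyk, hc⟩ := hy
      rw [mem_sec, mem_nbhd_iff]
      refine ⟨by omega, ?_⟩
      rcases hc with h | ⟨h0, h⟩
      · exact Or.inr (Or.inr (Or.inr (Or.inr (Or.inr (Or.inl h)))))
      · exact Or.inr (Or.inr (Or.inr (Or.inr (Or.inr (Or.inr ⟨y - 1, by omega, h⟩)))))
  calc (sec (nbhd n (comp1 A)) t).card ≤ min (k+1) (max a (max b d)) := hupc
    _ ≤ (sec (nbhd n A) t).card := by
        rw [min_max_distrib_left, min_max_distrib_left]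
        exact max_le h1 (max_le h2 h3)


theorem comp1_nbhd_le (n : ℕ) (A : Finset (ℕ × ℕ)) (hA : A ⊆ TnV n) :
    (nbhd n (comp1 A)).card ≤ (nbhd n A).card := by
  have hsub1 : nbhd n (comp1 A) ⊆ TnV n := Finset.filter_subset _ _
  have hsub2 : nbhd n A ⊆ TnV n := Finset.filter_subset _ _
  rw [card_eq_sum_sec hsub1, card_eq_sum_sec hsub2]
  refine Finset.sum_le_sum fun t htm => ?_
  exact col_le n t (by simpa using Nat.lt_succ_iff.mp (Finset.mem_range.mp htm)) A hA
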